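/- arXiv:2602.20635 — 3 statements merged into one kernel-verified Lean document; each statement's English description precedes it below -/
import Mathlib

section
/- A Hermitian complex matrix M is positive semidefinite if and only if all principal minors of M are nonnegative (a principal minor is the determinant of a submatrix obtained by selecting the same set of rows and columns). -/
open Matrix
open scoped ComplexOrder

variable {n : ℕ}

/-- det of matrix whose rows outside `S` are identity rows equals the principal minor on `S`. -/
lemma det_piecewise_one_rows (M : Matrix (Fin n) (Fin n) ℂ) (S : Finset (Fin n)) :
    (Matrix.of ((Sᶜ).piecewise (fun i => (1 : Matrix (Fin n) (Fin n) ℂ) i) (fun i => M i))).det =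
      (M.submatrix (fun i : S => (i : Fin n)) (fun i : S => (i : Fin n))).det := by
  classical
  set A : Matrix (Fin n) (Fin n) ℂ :=
    Matrix.of ((Sᶜ).piecewise (fun i => (1 : Matrix (Fin n) (Fin n) ℂ) i) (fun i => M i)) with hA
  let e : {x // x ∈ Sᶜ} ⊕ {x // x ∈ S} ≃ Fin n :=
    (Equiv.sumCongr (Equiv.refl _) (Equiv.subtypeEquivRight (fun x => by simp))).trans
      (Equiv.sumCompl (· ∈ Sᶜ))
  have h1 : A.submatrix e e =
      Matrix.fromBlocks 1 0
        (M.submatrix (fun i : S => (i : Fin n)) (fun i : ↥(Sᶜ) => (i : Fin n)))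
        (M.submatrix (fun i : S => (i : Fin n)) (fun i : S => (i : Fin n))) := by
    ext i j
    have he1 : ∀ x : {x // x ∈ Sᶜ}, e (Sum.inl x) = (x : Fin n) := fun x => by
      simp [e]
    have he2 : ∀ x : {x // x ∈ S}, e (Sum.inr x) = (x : Fin n) := fun x => by
      simp [e]
    cases i with
    | inl i =>
      have hrow : ∀ k, A (i : Fin n) k = (1 : Matrix (Fin n) (Fin n) ℂ) (i : Fin n) k :=
        fun k => congrFun (Finset.piecewise_eq_of_mem _ _ _ i.2) k
      cases j with
      | inl j =>
        simp only [submatrix_apply, he1, hrow, fromBlocks_apply₁₁, Matrix.one_apply,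
          Subtype.ext_iff]
      | inr j =>
        have hne : (i : Fin n) ≠ (j : Fin n) := fun h => (Finset.mem_compl.mp i.2) (h ▸ j.2)
        simp only [submatrix_apply, he1, he2, hrow, fromBlocks_apply₁₂, Matrix.one_apply,
          hne, if_false, Matrix.zero_apply]
    | inr i =>
      have hi : (i : Fin n) ∉ Sᶜ := by simp [i.2]
      have hrow : ∀ k, A (i : Fin n) k = M (i : Fin n) k :=
        fun k => congrFun (Finset.piecewise_eq_of_notMem _ _ _ hi) k
      cases j with
      | inl j => simp only [submatrix_apply, he1, he2, hrow, fromBlocks_apply₂₁]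
      | inr j => simp only [submatrix_apply, he2, hrow, fromBlocks_apply₂₂]
  have h2 := Matrix.det_submatrix_equiv_self e A
  rw [h1] at h2
  rw [← h2, Matrix.det_fromBlocks_zero₁₂, Matrix.det_one, one_mul]

/-- Expansion of `det (M + t • 1)` as a sum of principal minors. -/
lemma det_add_smul_one (M : Matrix (Fin n) (Fin n) ℂ) (t : ℂ) :
    (M + t • 1).det =
      ∑ S : Finset (Fin n), t ^ (Sᶜ.card) *
        (M.submatrix (fun i : S => (i : Fin n)) (fun i : S => (i : Fin n))).det := by
  classical
  have key : (M + t • 1).det =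
      (Matrix.detRowAlternating (R := ℂ) (n := Fin n)).toMultilinearMap
        ((fun i => M i) + fun i => t • (1 : Matrix (Fin n) (Fin n) ℂ) i) := rfl
  rw [key, MultilinearMap.map_add_univ]
  refine Finset.sum_congr rfl fun s _ => ?_
  have hp : s.piecewise (fun i => M i) (fun i => t • (1 : Matrix (Fin n) (Fin n) ℂ) i) =
      (sᶜ).piecewise
        (fun i => t • ((sᶜ).piecewise (fun i => (1 : Matrix (Fin n) (Fin n) ℂ) i)
          (fun i => M i)) i)
        ((sᶜ).piecewise (fun i => (1 : Matrix (Fin n) (Fin n) ℂ) i) (fun i => M i)) := by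
    funext i
    by_cases hi : i ∈ s
    · have hi' : i ∉ sᶜ := by simp [hi]
      simp [Finset.piecewise_eq_of_mem _ _ _ hi, Finset.piecewise_eq_of_notMem _ _ _ hi']
    · have hi' : i ∈ sᶜ := by simp [hi]
      simp [Finset.piecewise_eq_of_notMem _ _ _ hi, Finset.piecewise_eq_of_mem _ _ _ hi']
  rw [hp, MultilinearMap.map_piecewise_smul]
  have := det_piecewise_one_rows M s
  simp only [Finset.prod_const, smul_eq_mul]
  congr 1

/-- A Hermitian complex matrix is positive semidefinite iff all of its
principal minors (determinants of submatrices on the same set of rows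
and columns) are nonnegative. -/
theorem posSemidef_iff_principal_minors_nonneg {n : ℕ}
    (M : Matrix (Fin n) (Fin n) ℂ) (hM : M.IsHermitian) :
    M.PosSemidef ↔
      ∀ S : Finset (Fin n),
        0 ≤ (M.submatrix (fun i : S => (i : Fin n)) (fun i : S => (i : Fin n))).det := by
  classical
  constructor
  · intro hP S
    have hP' := hP.submatrix (fun i : S => (i : Fin n))
    rw [hP'.1.det_eq_prod_eigenvalues]
    refine Finset.prod_nonneg fun i _ => ?_
    exact Complex.zero_le_real.mpr (hP'.eigenvalues_nonneg i)
  · intro h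
    refine hM.posSemidef_iff_eigenvalues_nonneg.mpr fun i => ?_
    by_contra hneg
    push_neg at hneg
    set t : ℝ := -hM.eigenvalues i with ht
    have ht0 : 0 < t := by rw [ht]; linarith [show (0 : Fin n → ℝ) i = 0 from rfl]
    have hv0 : (⇑(hM.eigenvectorBasis i) : Fin n → ℂ) ≠ 0 := by
      have hne := hM.eigenvectorBasis.orthonormal.ne_zero i
      intro hcontr
      apply hne
      ext j
      exact congrFun hcontr j
    have hker : (M + (t : ℂ) • 1) *ᵥ ⇑(hM.eigenvectorBasis i) = 0 := by
      rw [Matrix.add_mulVec, hM.mulVec_eigenvectorBasis, Matrix.smul_mulVec,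
        Matrix.one_mulVec]
      have hsm : (t : ℂ) • ⇑(hM.eigenvectorBasis i) = t • ⇑(hM.eigenvectorBasis i) := by
        ext j; simp [Complex.real_smul]
      rw [hsm, ← add_smul]
      simp [ht]
    have hdet0 : (M + (t : ℂ) • 1).det = 0 :=
      Matrix.exists_mulVec_eq_zero_iff.mp ⟨_, hv0, hker⟩
    have hpos : 0 < (M + (t : ℂ) • 1).det := by
      rw [det_add_smul_one]
      refine Finset.sum_pos' (fun s _ => ?_) ⟨∅, Finset.mem_univ _, ?_⟩
      · exact mul_nonneg (pow_nonneg (Complex.zero_le_real.mpr ht0.le) _) (h s)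
      · haveI : IsEmpty ((∅ : Finset (Fin n)) : Finset (Fin n)) :=
          Finset.isEmpty_coe_sort.mpr rfl
        rw [Matrix.det_isEmpty]
        simpa using pow_pos (Complex.zero_lt_real.mpr ht0) ((∅ : Finset (Fin n))ᶜ.card)
    exact absurd hdet0 hpos.ne'
end

section
/- For any set X of density matrices on n qudits, the set of states obtained by first applying one insertion and then one deletion is contained in the set obtained by first applying one deletion and then one insertion: D¹(I¹(X)) ⊆ I¹(D¹(X)). -/
open Matrix
open scoped ComplexOrder

/-- Matrices on `n` qudits of level `l`. -/
abbrev QMat (l n : ℕ) := Matrix (Fin n → Fin l) (Fin n → Fin l) ℂ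

/-- A quantum state on some finite number of qudits. -/
def QState (l : ℕ) := Σ n : ℕ, QMat l n

/-- Density matrix: positive semidefinite with trace 1. -/
def IsDensity {l n : ℕ} (ρ : QMat l n) : Prop := ρ.PosSemidef ∧ ρ.trace = 1

def IsDensityS {l : ℕ} (ρ : QState l) : Prop := ρ.2.PosSemidef ∧ ρ.2.trace = 1

/-- Partial trace over the qudit at position `p`. -/
noncomputable def traceOut {l n : ℕ} (p : Fin (n + 1)) (ρ : QMat l (n + 1)) : QMat l n :=
  fun x y => ∑ z : Fin l, ρ (p.insertNth z x) (p.insertNth z y)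

/-- Single deletion: all states obtained by tracing out one qudit. -/
def del1 {l : ℕ} : QState l → Set (QState l)
  | ⟨0, _⟩ => ∅
  | ⟨n + 1, ρ⟩ => { σ | ∃ p : Fin (n + 1), σ = ⟨n, traceOut p ρ⟩ }

/-- Single insertion sphere: density matrices having `ρ` among their single deletions. -/
def ins1 {l : ℕ} (ρ : QState l) : Set (QState l) :=
  { σ | IsDensityS σ ∧ ρ ∈ del1 σ }

def delSet {l : ℕ} (X : Set (QState l)) : Set (QState l) := ⋃ ρ ∈ X, del1 ρ
def insSet {l : ℕ} (X : Set (QState l)) : Set (QState l) := ⋃ ρ ∈ X, ins1 ρ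

/-- `s`-deletion errors. -/
def Dq {l : ℕ} : ℕ → Set (QState l) → Set (QState l)
  | 0, X => X
  | s + 1, X => delSet (Dq s X)

/-- `t`-insertion errors. -/
def Iq {l : ℕ} : ℕ → Set (QState l) → Set (QState l)
  | 0, X => X
  | t + 1, X => insSet (Iq t X)

/-- Quantum indel distance. -/
noncomputable def qdist {l : ℕ} (ρ₁ ρ₂ : QState l) : ℕ :=
  sInf { k | ∃ s t : ℕ, s + t = k ∧ (Dq s {ρ₁} ∩ Dq t {ρ₂}).Nonempty }

lemma succAbove_comm_aux {n : ℕ} (p : Fin (n + 2)) (q p₂ : Fin (n + 1))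
    (hp : (p.succAbove q).succAbove p₂ = p) (k : Fin n) :
    (p.succAbove q).succAbove (p₂.succAbove k) = p.succAbove (q.succAbove k) := by
  set q₂ := p.succAbove q with hq₂
  have hf : StrictMono (fun k : Fin n => q₂.succAbove (p₂.succAbove k)) :=
    (Fin.strictMono_succAbove q₂).comp (Fin.strictMono_succAbove p₂)
  have hg : StrictMono (fun k : Fin n => p.succAbove (q.succAbove k)) :=
    (Fin.strictMono_succAbove p).comp (Fin.strictMono_succAbove q)
  have hrange : Set.range (fun k : Fin n => q₂.succAbove (p₂.succAbove k))
      = Set.range (fun k : Fin n => p.succAbove (q.succAbove k)) := by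
    ext a
    simp only [Set.mem_range]
    constructor
    · rintro ⟨k, rfl⟩
      have ha1 : q₂.succAbove (p₂.succAbove k) ≠ p := by
        rw [← hp]
        exact fun h => Fin.succAbove_ne p₂ k (Fin.succAbove_right_injective h)
      obtain ⟨m', hm⟩ := Fin.exists_succAbove_eq ha1
      have hmq : m' ≠ q := by
        rintro rfl
        exact Fin.succAbove_ne q₂ (p₂.succAbove k) hm.symm
      obtain ⟨k', hk'⟩ := Fin.exists_succAbove_eq hmq
      exact ⟨k', by rw [hk', hm]⟩
    · rintro ⟨k, rfl⟩
      have ha1 : p.succAbove (q.succAbove k) ≠ q₂ := by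
        rw [hq₂]
        exact fun h => Fin.succAbove_ne q k (Fin.succAbove_right_injective h)
      obtain ⟨m', hm⟩ := Fin.exists_succAbove_eq ha1
      have hmp : m' ≠ p₂ := by
        rintro rfl
        rw [hp] at hm
        exact Fin.succAbove_ne p (q.succAbove k) hm.symm
      obtain ⟨k', hk'⟩ := Fin.exists_succAbove_eq hmp
      exact ⟨k', by rw [hk', hm]⟩
  haveI : WellFoundedLT (Fin n) := inferInstance
  exact congrFun ((StrictMono.range_inj (γ := Fin (n+2)) hf hg).mp hrange) k

lemma insertNth_insertNth_comm {n : ℕ} {α : Type*} (p : Fin (n + 2)) (q p₂ : Fin (n + 1))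
    (hp : (p.succAbove q).succAbove p₂ = p) (z w : α) (x : Fin n → α) :
    Fin.insertNth (α := fun _ => α) p z (Fin.insertNth (α := fun _ => α) q w x) =
      Fin.insertNth (α := fun _ => α) (p.succAbove q) w
        (Fin.insertNth (α := fun _ => α) p₂ z x) := by
  funext j
  refine Fin.succAboveCases (p.succAbove q) ?_ ?_ j
  · simp
  · intro i
    refine Fin.succAboveCases p₂ ?_ ?_ i
    · simp only [Fin.insertNth_apply_succAbove, Fin.insertNth_apply_same]
      rw [hp]
      simp
    · intro k
      simp only [Fin.insertNth_apply_succAbove]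
      rw [succAbove_comm_aux p q p₂ hp k]
      simp

lemma traceOut_comm {l m : ℕ} (p : Fin (m + 2)) (q p₂ : Fin (m + 1))
    (hp : (p.succAbove q).succAbove p₂ = p) (σ : QMat l (m + 2)) :
    traceOut q (traceOut p σ) = traceOut p₂ (traceOut (p.succAbove q) σ) := by
  funext x y
  simp only [traceOut]
  rw [Finset.sum_comm]
  refine Finset.sum_congr rfl fun z _ => Finset.sum_congr rfl fun w _ => ?_
  rw [insertNth_insertNth_comm p q p₂ hp, insertNth_insertNth_comm p q p₂ hp]

lemma trace_traceOut {l m : ℕ} (p : Fin (m + 1)) (ρ : QMat l (m + 1)) :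
    (traceOut p ρ).trace = ρ.trace := by
  have h := Equiv.sum_comp (Fin.insertNthEquiv (fun _ => Fin l) p) (fun a => ρ a a)
  simp only [Matrix.trace, Matrix.diag, traceOut]
  rw [← h, Fintype.sum_prod_type, Finset.sum_comm]
  rfl

lemma posSemidef_add' {n : Type*} [Fintype n] {A B : Matrix n n ℂ}
    (hA : A.PosSemidef) (hB : B.PosSemidef) : (A + B).PosSemidef := by
  refine ⟨hA.1.add hB.1, fun x => ?_⟩
  exact (hA.add hB).2 x

lemma posSemidef_traceOut {l m : ℕ} (p : Fin (m + 1)) {ρ : QMat l (m + 1)}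
    (h : ρ.PosSemidef) : (traceOut p ρ).PosSemidef := by
  have he : traceOut p ρ =
      ∑ z : Fin l, ρ.submatrix (fun x => p.insertNth z x) (fun x => p.insertNth z x) := by
    funext x y
    simp [traceOut, Matrix.sum_apply]
  rw [he]
  exact Finset.sum_induction _ _ (fun A B hA hB => posSemidef_add' hA hB)
    Matrix.PosSemidef.zero (fun z _ => h.submatrix _)


/-- One insertion followed by one deletion is contained in one deletion
followed by one insertion: `D¹(I¹(X)) ⊆ I¹(D¹(X))`. -/
theorem del_ins_subset_ins_del {l n : ℕ} (hn : 1 ≤ n) (X : Set (QState l))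
    (hX : ∀ ρ ∈ X, ρ.1 = n ∧ IsDensityS ρ) :
    Dq 1 (Iq 1 X) ⊆ Iq 1 (Dq 1 X) := by
  obtain ⟨m, rfl⟩ : ∃ m, n = m + 1 := ⟨n - 1, by omega⟩
  intro τ hτ
  simp only [Dq, Iq, delSet, insSet, Set.mem_iUnion] at hτ ⊢
  obtain ⟨σ, hσ, hτσ⟩ := hτ
  obtain ⟨ρ, hρX, hσdens, hρσ⟩ := hσ
  obtain ⟨hρ1, -⟩ := hX ρ hρX
  obtain ⟨ns, σm⟩ := σ
  match ns, σm, hσdens, hρσ, hτσ with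
  | 0, σm, _, hρσ, _ => exact (Set.notMem_empty ρ (by simp only [del1] at hρσ; exact hρσ)).elim
  | k + 1, σm, hσdens, hρσ, hτσ =>
    simp only [del1, Set.mem_setOf_eq] at hρσ hτσ
    obtain ⟨pρ, rfl⟩ := hρσ
    obtain ⟨pτ, rfl⟩ := hτσ
    have hk : k = m + 1 := hρ1
    subst hk
    have hτdens : IsDensityS ⟨m + 1, traceOut pτ σm⟩ :=
      ⟨posSemidef_traceOut pτ hσdens.1, by
        show (traceOut pτ σm).trace = 1
        rw [trace_traceOut]; exact hσdens.2⟩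
    rcases eq_or_ne pτ pρ with rfl | hne
    · exact ⟨⟨m, traceOut 0 (traceOut pτ σm)⟩,
        ⟨⟨m + 1, traceOut pτ σm⟩, hρX, ⟨0, rfl⟩⟩, hτdens, ⟨0, rfl⟩⟩
    · obtain ⟨q, hq⟩ := Fin.exists_succAbove_eq (show pρ ≠ pτ from hne.symm)
      obtain ⟨p₂, hp₂⟩ := Fin.exists_succAbove_eq (Fin.ne_succAbove pτ q)
      have key := traceOut_comm pτ q p₂ hp₂ σm
      rw [hq] at key
      exact ⟨⟨m, traceOut q (traceOut pτ σm)⟩,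
        ⟨⟨m + 1, traceOut pρ σm⟩, hρX, ⟨p₂, by rw [key]⟩⟩, hτdens, ⟨q, rfl⟩⟩
end

section
/- Let ρ₁, ρ₂ be density matrices on n qudits with s ≥ 1. If the (s-deletions-then-t-insertions) error spheres of ρ₁ and ρ₂ are disjoint, i.e., (I^t∘D^s)(ρ₁) ∩ (I^t∘D^s)(ρ₂) = ∅, then also (I^{t+1}∘D^{s−1})(ρ₁) ∩ (I^{t+1}∘D^{s−1})(ρ₂) = ∅. -/
open Matrix
open scoped ComplexOrder

/-! ### Auxiliary lemmas -/

lemma traceOut_eq_sum_submatrix {l n : ℕ} (p : Fin (n+1)) (ρ : QMat l (n+1)) :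
    traceOut p ρ = ∑ z : Fin l, ρ.submatrix (p.insertNth z) (p.insertNth z) := by
  funext x y
  simp [traceOut, Matrix.sum_apply]

lemma traceOut_trace {l n : ℕ} (p : Fin (n+1)) (ρ : QMat l (n+1)) :
    (traceOut p ρ).trace = ρ.trace := by
  unfold Matrix.trace Matrix.diag traceOut
  rw [← Equiv.sum_comp (Fin.insertNthEquiv (fun _ => Fin l) p) (fun u => ρ u u)]
  rw [Fintype.sum_prod_type]
  rw [Finset.sum_comm]
  rfl

lemma traceOut_posSemidef {l n : ℕ} (p : Fin (n+1)) {ρ : QMat l (n+1)}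
    (h : ρ.PosSemidef) : (traceOut p ρ).PosSemidef := by
  rw [traceOut_eq_sum_submatrix]
  exact Finset.sum_induction _ _ (fun a b ha hb => ha.add hb) Matrix.PosSemidef.zero
    (fun z _ => h.submatrix _)

lemma succAbove_succAbove_comm {n : ℕ} {p q : Fin (n+2)} {p' q' : Fin (n+1)}
    (hq : p.succAbove q' = q) (hp : q.succAbove p' = p) :
    p.succAbove ∘ q'.succAbove = q.succAbove ∘ p'.succAbove := by
  have hf : StrictMono (p.succAbove ∘ q'.succAbove) :=
    (Fin.strictMono_succAbove p).comp (Fin.strictMono_succAbove q')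
  have hg : StrictMono (q.succAbove ∘ p'.succAbove) :=
    (Fin.strictMono_succAbove q).comp (Fin.strictMono_succAbove p')
  have h1 : p.succAbove '' ({q'}ᶜ) = {p}ᶜ \ {q} := by
    rw [Set.compl_eq_univ_diff, Set.image_diff (Fin.succAbove_right_injective),
      Set.image_univ, Fin.range_succAbove, Set.image_singleton, hq]
  have h2 : q.succAbove '' ({p'}ᶜ) = {q}ᶜ \ {p} := by
    rw [Set.compl_eq_univ_diff, Set.image_diff (Fin.succAbove_right_injective),
      Set.image_univ, Fin.range_succAbove, Set.image_singleton, hp]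
  have key : Set.range (p.succAbove ∘ q'.succAbove) = Set.range (q.succAbove ∘ p'.succAbove) := by
    rw [Set.range_comp, Set.range_comp, Fin.range_succAbove, Fin.range_succAbove, h1, h2]
    ext j; simp [and_comm]
  exact (StrictMono.range_inj hf hg).mp key

lemma insertNth_insertNth_comm_s15 {l n : ℕ} {p q : Fin (n+2)} {p' q' : Fin (n+1)}
    (hq : p.succAbove q' = q) (hp : q.succAbove p' = p) (c d : Fin l) (x : Fin n → Fin l) :
    p.insertNth (α := fun _ => Fin l) c (q'.insertNth (α := fun _ => Fin l) d x)
      = q.insertNth (α := fun _ => Fin l) d (p'.insertNth (α := fun _ => Fin l) c x) := by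
  funext j
  rcases eq_or_ne j p with rfl | hjp
  · rw [Fin.insertNth_apply_same, ← hp, Fin.insertNth_apply_succAbove,
      Fin.insertNth_apply_same]
  rcases eq_or_ne j q with rfl | hjq
  · rw [Fin.insertNth_apply_same, ← hq, Fin.insertNth_apply_succAbove,
      Fin.insertNth_apply_same]
  · obtain ⟨i₁, rfl⟩ := Fin.exists_succAbove_eq hjp
    have hi₁ : i₁ ≠ q' := by rintro rfl; exact hjq hq
    obtain ⟨i, rfl⟩ := Fin.exists_succAbove_eq hi₁
    rw [Fin.insertNth_apply_succAbove, Fin.insertNth_apply_succAbove]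
    have hcomm := congrFun (succAbove_succAbove_comm hq hp) i
    simp only [Function.comp_apply] at hcomm
    rw [hcomm, Fin.insertNth_apply_succAbove, Fin.insertNth_apply_succAbove]

lemma traceOut_comm_s15 {l n : ℕ} (a b : Fin (n+2)) (ζ : QMat l (n+2)) :
    ∃ a' b' : Fin (n+1), traceOut b' (traceOut a ζ) = traceOut a' (traceOut b ζ) := by
  rcases eq_or_ne a b with rfl | hab
  · exact ⟨0, 0, rfl⟩
  · obtain ⟨b', hb'⟩ := Fin.exists_succAbove_eq (Ne.symm hab)
    obtain ⟨a', ha'⟩ := Fin.exists_succAbove_eq hab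
    refine ⟨a', b', ?_⟩
    funext x y
    simp only [traceOut]
    rw [Finset.sum_comm]
    refine Finset.sum_congr rfl fun c _ => Finset.sum_congr rfl fun d _ => ?_
    rw [insertNth_insertNth_comm_s15 hb' ha', insertNth_insertNth_comm_s15 hb' ha']

lemma mem_del1 {l m : ℕ} {w : QMat l (m+1)} {σ : QState l} :
    σ ∈ del1 (⟨m+1, w⟩ : QState l) ↔ ∃ p : Fin (m+1), σ = ⟨m, traceOut p w⟩ :=
  Iff.rfl

lemma mem_delSet {l : ℕ} {X : Set (QState l)} {σ : QState l} :
    σ ∈ delSet X ↔ ∃ ρ ∈ X, σ ∈ del1 ρ := by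
  simp [delSet]

lemma mem_insSet {l : ℕ} {X : Set (QState l)} {σ : QState l} :
    σ ∈ insSet X ↔ ∃ ρ ∈ X, σ ∈ ins1 ρ := by
  simp [insSet]

lemma Dq_succ' {l : ℕ} (k : ℕ) (X : Set (QState l)) :
    Dq (k+1) X = Dq k (delSet X) := by
  induction k generalizing X with
  | zero => rfl
  | succ k ih =>
    show delSet (Dq (k+1) X) = delSet (Dq k (delSet X))
    rw [ih]

lemma Iq_succ' {l : ℕ} (k : ℕ) (X : Set (QState l)) :
    Iq (k+1) X = Iq k (insSet X) := by
  induction k generalizing X with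
  | zero => rfl
  | succ k ih =>
    show insSet (Iq (k+1) X) = insSet (Iq k (insSet X))
    rw [ih]

lemma mem_Dq_iff {l : ℕ} (k : ℕ) (X : Set (QState l)) (σ : QState l) :
    σ ∈ Dq k X ↔ ∃ ρ ∈ X, σ ∈ Dq k {ρ} := by
  induction k generalizing σ with
  | zero => simp [Dq]
  | succ k ih =>
    show σ ∈ delSet (Dq k X) ↔ ∃ ρ ∈ X, σ ∈ delSet (Dq k {ρ})
    rw [mem_delSet]
    constructor
    · rintro ⟨τ, hτ, hστ⟩
      obtain ⟨ρ, hρ, hτρ⟩ := (ih τ).mp hτ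
      exact ⟨ρ, hρ, mem_delSet.mpr ⟨τ, hτρ, hστ⟩⟩
    · rintro ⟨ρ, hρ, hσ⟩
      obtain ⟨τ, hτρ, hστ⟩ := mem_delSet.mp hσ
      exact ⟨τ, (ih τ).mpr ⟨ρ, hρ, hτρ⟩, hστ⟩

lemma mem_Iq_iff {l : ℕ} (k : ℕ) (X : Set (QState l)) (σ : QState l) :
    σ ∈ Iq k X ↔ ∃ ρ ∈ X, σ ∈ Iq k {ρ} := by
  induction k generalizing σ with
  | zero => simp [Iq]
  | succ k ih =>
    show σ ∈ insSet (Iq k X) ↔ ∃ ρ ∈ X, σ ∈ insSet (Iq k {ρ})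
    rw [mem_insSet]
    constructor
    · rintro ⟨τ, hτ, hστ⟩
      obtain ⟨ρ, hρ, hτρ⟩ := (ih τ).mp hτ
      exact ⟨ρ, hρ, mem_insSet.mpr ⟨τ, hτρ, hστ⟩⟩
    · rintro ⟨ρ, hρ, hσ⟩
      obtain ⟨τ, hτρ, hστ⟩ := mem_insSet.mp hσ
      exact ⟨τ, (ih τ).mpr ⟨ρ, hρ, hτρ⟩, hστ⟩

lemma del1_size {l : ℕ} {σ τ : QState l} (h : σ ∈ del1 τ) : σ.1 + 1 = τ.1 := by
  obtain ⟨nt, T⟩ := τ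
  cases nt with
  | zero => exact absurd h (by simp [del1])
  | succ m => obtain ⟨p, rfl⟩ := h; rfl

lemma del1_density {l : ℕ} {σ τ : QState l} (h : σ ∈ del1 τ) (hτ : IsDensityS τ) :
    IsDensityS σ := by
  obtain ⟨nt, T⟩ := τ
  cases nt with
  | zero => exact absurd h (by simp [del1])
  | succ m =>
    obtain ⟨p, rfl⟩ := h
    exact ⟨traceOut_posSemidef p hτ.1, (traceOut_trace p T).trans hτ.2⟩

lemma Dq_size {l : ℕ} {τ : QState l} (k : ℕ) {σ : QState l} (h : σ ∈ Dq k {τ}) :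
    σ.1 + k = τ.1 := by
  induction k generalizing σ with
  | zero => rw [show σ = τ from h]; omega
  | succ k ih =>
    obtain ⟨μ, hμ, hσμ⟩ := mem_delSet.mp h
    have := del1_size hσμ
    have := ih hμ
    omega

lemma Dq_density {l : ℕ} {τ : QState l} (k : ℕ) {σ : QState l} (h : σ ∈ Dq k {τ})
    (hτ : IsDensityS τ) : IsDensityS σ := by
  induction k generalizing σ with
  | zero => rwa [show σ = τ from h]
  | succ k ih =>
    obtain ⟨μ, hμ, hσμ⟩ := mem_delSet.mp h
    exact del1_density hσμ (ih hμ)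

lemma Iq_mem_Dq {l : ℕ} (k : ℕ) {z τ : QState l} (h : z ∈ Iq k {τ}) :
    τ ∈ Dq k {z} ∧ (0 < k → IsDensityS z) := by
  induction k generalizing z with
  | zero =>
    refine ⟨?_, by omega⟩
    rw [show z = τ from h]; exact rfl
  | succ k ih =>
    obtain ⟨μ, hμ, hzμ⟩ := mem_insSet.mp h
    obtain ⟨hzdens, hμz⟩ := hzμ
    obtain ⟨hτμ, _⟩ := ih hμ
    refine ⟨?_, fun _ => hzdens⟩
    rw [Dq_succ']
    exact (mem_Dq_iff k _ τ).mpr ⟨μ, mem_delSet.mpr ⟨z, rfl, hμz⟩, hτμ⟩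

lemma Dq_mem_Iq {l : ℕ} (k : ℕ) {z τ : QState l} (hz : IsDensityS z) (h : τ ∈ Dq k {z}) :
    z ∈ Iq k {τ} := by
  induction k generalizing τ with
  | zero => rw [show τ = z from h]; exact rfl
  | succ k ih =>
    obtain ⟨σ, hσ, hτσ⟩ := mem_delSet.mp h
    have hσdens : IsDensityS σ := Dq_density k hσ hz
    rw [Iq_succ']
    exact (mem_Iq_iff k _ z).mpr ⟨σ, mem_insSet.mpr ⟨τ, rfl, hσdens, hτσ⟩, ih hσ⟩

/-- Key exchange lemma: a `t`-fold deletion of `w` has a single deletion that is a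
`t`-fold deletion of `traceOut p w`. -/
lemma exchange {l : ℕ} (t : ℕ) : ∀ (m : ℕ), t ≤ m → ∀ (w : QMat l (m+1)) (p : Fin (m+1))
    (τ : QState l), τ ∈ Dq t {(⟨m+1, w⟩ : QState l)} →
    ∃ τ', τ' ∈ del1 τ ∧ τ' ∈ Dq t {(⟨m, traceOut p w⟩ : QState l)} := by
  induction t with
  | zero =>
    intro m _ w p τ hτ
    rw [show τ = ⟨m+1, w⟩ from hτ]
    exact ⟨⟨m, traceOut p w⟩, ⟨p, rfl⟩, rfl⟩
  | succ t ih =>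
    intro m htm w p τ hτ
    obtain ⟨σ, hσ, hτσ⟩ := mem_delSet.mp hτ
    -- σ has m+1-t qudits, m+1-t ≥ 2
    have hσsize : σ.1 + t = m + 1 := Dq_size t hσ
    obtain ⟨nσ, S⟩ := σ
    have hσsize' : nσ + t = m + 1 := hσsize
    obtain ⟨k, rfl⟩ : ∃ k, nσ = k + 2 := ⟨nσ - 2, by omega⟩
    obtain ⟨q, rfl⟩ := mem_del1.mp hτσ
    obtain ⟨σ', hσ'del, hσ'⟩ := ih m (by omega) w p ⟨k+2, S⟩ hσ
    obtain ⟨r, rfl⟩ := mem_del1.mp hσ'del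
    obtain ⟨q', r', hcomm⟩ := traceOut_comm_s15 q r S
    refine ⟨⟨k, traceOut r' (traceOut q S)⟩, ⟨r', rfl⟩, ?_⟩
    show _ ∈ delSet (Dq t _)
    exact mem_delSet.mpr ⟨⟨k+1, traceOut r S⟩, hσ', ⟨q', by rw [hcomm]⟩⟩

/-- If the `(I^t ∘ D^s)`-error spheres of `ρ₁` and `ρ₂` are disjoint (`s ≥ 1`),
then so are the `(I^{t+1} ∘ D^{s-1})`-error spheres. -/
theorem disjoint_step {l n s t : ℕ} (hs : 1 ≤ s) (hsn : s ≤ n)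
    (ρ₁ ρ₂ : QMat l n) (h₁ : IsDensity ρ₁) (h₂ : IsDensity ρ₂)
    (hdisj : Iq t (Dq s {(⟨n, ρ₁⟩ : QState l)}) ∩ Iq t (Dq s {(⟨n, ρ₂⟩ : QState l)}) = ∅) :
    Iq (t + 1) (Dq (s - 1) {(⟨n, ρ₁⟩ : QState l)}) ∩
      Iq (t + 1) (Dq (s - 1) {(⟨n, ρ₂⟩ : QState l)}) = ∅ := by
  rw [Set.eq_empty_iff_forall_notMem]
  rintro z ⟨hz₁, hz₂⟩
  obtain ⟨τ₁, hτ₁D, hzτ₁⟩ := (mem_Iq_iff _ _ z).mp hz₁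
  obtain ⟨τ₂, hτ₂D, hzτ₂⟩ := (mem_Iq_iff _ _ z).mp hz₂
  obtain ⟨hτ₁z, hzdens'⟩ := Iq_mem_Dq _ hzτ₁
  obtain ⟨hτ₂z, -⟩ := Iq_mem_Dq _ hzτ₂
  have hzdens : IsDensityS z := hzdens' (by omega)
  -- sizes
  have hτ₁size : τ₁.1 + (s-1) = n := Dq_size _ hτ₁D
  have hzsize : τ₁.1 + (t+1) = z.1 := Dq_size _ hτ₁z
  obtain ⟨nz, ζ⟩ := z
  obtain ⟨M, rfl⟩ : ∃ M, nz = M + 2 := ⟨nz - 2, by simp at hzsize ⊢; omega⟩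
  -- decompose the (t+1)-deletion chains from z
  rw [Dq_succ'] at hτ₁z hτ₂z
  obtain ⟨z₁, hz₁del, hτ₁z₁⟩ := (mem_Dq_iff _ _ _).mp hτ₁z
  obtain ⟨z₂, hz₂del, hτ₂z₂⟩ := (mem_Dq_iff _ _ _).mp hτ₂z
  obtain ⟨w₁, hw₁, hz₁'⟩ := mem_delSet.mp hz₁del
  obtain ⟨w₂, hw₂, hz₂'⟩ := mem_delSet.mp hz₂del
  replace hw₁ := Set.mem_singleton_iff.mp hw₁; replace hw₂ := Set.mem_singleton_iff.mp hw₂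
  subst hw₁; subst hw₂
  obtain ⟨a, rfl⟩ := mem_del1.mp hz₁'
  obtain ⟨b, rfl⟩ := mem_del1.mp hz₂'
  obtain ⟨a', b', hcomm⟩ := traceOut_comm_s15 a b ζ
  have hzsize' : τ₁.1 + (t+1) = M + 2 := hzsize
  have hM : t ≤ M := by omega
  obtain ⟨τ₁', hτ₁'del, hτ₁'D⟩ := exchange t M hM (traceOut a ζ) b' τ₁ hτ₁z₁
  obtain ⟨τ₂', hτ₂'del, hτ₂'D⟩ := exchange t M hM (traceOut b ζ) a' τ₂ hτ₂z₂
  rw [← hcomm] at hτ₂'D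
  have hτ₁'s : τ₁' ∈ Dq s {(⟨n, ρ₁⟩ : QState l)} := by
    rw [show s = (s-1)+1 by omega]
    exact mem_delSet.mpr ⟨τ₁, hτ₁D, hτ₁'del⟩
  have hτ₂'s : τ₂' ∈ Dq s {(⟨n, ρ₂⟩ : QState l)} := by
    rw [show s = (s-1)+1 by omega]
    exact mem_delSet.mpr ⟨τ₂, hτ₂D, hτ₂'del⟩
  have hWdens : IsDensityS (⟨M, traceOut b' (traceOut a ζ)⟩ : QState l) :=
    del1_density (τ := ⟨M+1, traceOut a ζ⟩) ⟨b', rfl⟩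
      (del1_density (τ := ⟨M+2, ζ⟩) ⟨a, rfl⟩ hzdens)
  have hW₁ : (⟨M, traceOut b' (traceOut a ζ)⟩ : QState l) ∈ Iq t (Dq s {(⟨n, ρ₁⟩ : QState l)}) :=
    (mem_Iq_iff _ _ _).mpr ⟨τ₁', hτ₁'s, Dq_mem_Iq t hWdens hτ₁'D⟩
  have hW₂ : (⟨M, traceOut b' (traceOut a ζ)⟩ : QState l) ∈ Iq t (Dq s {(⟨n, ρ₂⟩ : QState l)}) :=
    (mem_Iq_iff _ _ _).mpr ⟨τ₂', hτ₂'s, Dq_mem_Iq t hWdens hτ₂'D⟩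
  exact Set.eq_empty_iff_forall_notMem.mp hdisj _ ⟨hW₁, hW₂⟩
end
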